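/- arXiv:0810.3794 — 2 statements merged into one kernel-verified Lean document; each statement's English description precedes it below -/
import Mathlib

section
/- Let X be a proper CAT(0) space, γ : J → X a geodesic with closed image, and (x_i) ⊂ X a sequence converging to a boundary point ξ ∈ ∂X (meaning the functions d(x_i,·) − d(x_i, y) converge locally uniformly to a Busemann function b_ξ). Then, after passing to a subsequence, the nearest-point projections π_{γ(J)}(x_i) converge to a point in the projection set π_{γ(J)}(ξ). -/
open Metric Set Filter Topology

section Preamble

variable {X : Type*} [MetricSpace X]

/-- `γ` is a unit-speed geodesic on the parameter set `J`. -/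
def IsGeodesicOn (γ : ℝ → X) (J : Set ℝ) : Prop :=
  ∀ s ∈ J, ∀ t ∈ J, dist (γ s) (γ t) = |s - t|

/-- `X` is a CAT(0) space: geodesic, and the CN (Bruhat–Tits) comparison inequality holds. -/
structure IsCAT0 (X : Type*) [MetricSpace X] : Prop where
  geodesic : ∀ x y : X, ∃ γ : ℝ → X,
    IsGeodesicOn γ (Set.Icc 0 (dist x y)) ∧ γ 0 = x ∧ γ (dist x y) = y
  cn : ∀ x y z m : X, dist y m = dist y z / 2 → dist z m = dist y z / 2 →
    dist x m ^ 2 ≤ (dist x y ^ 2 + dist x z ^ 2) / 2 - dist y z ^ 2 / 4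

/-- The set of nearest points of `x` in `C`. -/
def projSet (C : Set X) (x : X) : Set X := {p ∈ C | dist x p = Metric.infDist x C}

/-- A geodesic is `B`-contracting if nearest-point projections of closed balls disjoint
from it have diameter at most `B`. -/
def IsContracting (γ : ℝ → X) (J : Set ℝ) (B : ℝ) : Prop :=
  ∀ c : X, ∀ r : ℝ, Metric.closedBall c r ∩ γ '' J = ∅ →
    Metric.diam (⋃ x ∈ Metric.closedBall c r, projSet (γ '' J) x) ≤ B

/-- Geodesically convex subset. -/
def GeodConvex (C : Set X) : Prop :=
  ∀ x ∈ C, ∀ y ∈ C, ∀ γ : ℝ → X, IsGeodesicOn γ (Set.Icc 0 (dist x y)) →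
    γ 0 = x → γ (dist x y) = y → ∀ t ∈ Set.Icc 0 (dist x y), γ t ∈ C

/-- The normalized distance function `z ↦ d(x,z) - d(x,y)` as a continuous map. -/
noncomputable def busFun (y x : X) : C(X, ℝ) :=
  ⟨fun z => dist x z - dist x y, (continuous_const.dist continuous_id).sub continuous_const⟩

/-- The visual boundary (with basepoint `y`), realized inside `C(X,ℝ)` as the set of
limits at infinity of normalized distance functions. -/
def visualBoundary (y : X) : Set C(X, ℝ) :=
  closure (Set.range (busFun y)) \ Set.range (busFun y)

/-- The induced action of an isometry on the compactification `X ∪ ∂X ⊆ C(X,ℝ)`. -/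
noncomputable def bAct (y : X) (g : X ≃ᵢ X) (f : C(X, ℝ)) : C(X, ℝ) :=
  ⟨fun z => f (g.symm z) - f (g.symm y),
    (f.continuous.comp g.symm.continuous).sub continuous_const⟩

/-- `γ` tends to the boundary point `ξ` in forward time. -/
def raysTo (y : X) (γ : ℝ → X) (ξ : C(X, ℝ)) : Prop :=
  Filter.Tendsto (fun t => busFun y (γ t)) Filter.atTop (nhds ξ)

/-- `γ` tends to the boundary point `ξ` in backward time. -/
def raysToNeg (y : X) (γ : ℝ → X) (ξ : C(X, ℝ)) : Prop :=
  Filter.Tendsto (fun t => busFun y (γ t)) Filter.atBot (nhds ξ)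

/-- `γ` is an oriented axis for `g`, with translation length `τ` equal to the minimum
of the displacement function of `g`. -/
def IsAxis (g : X ≃ᵢ X) (γ : ℝ → X) (τ : ℝ) : Prop :=
  IsGeodesicOn γ Set.univ ∧ 0 < τ ∧ (∀ t, g (γ t) = γ (t + τ)) ∧
  ∀ x : X, τ ≤ dist x (g x)

/-- `γ` bounds a flat half-plane: an isometrically embedded Euclidean half-plane. -/
def BoundsFlatHalfPlane (γ : ℝ → X) : Prop :=
  ∃ F : ℝ × ℝ → X,
    (∀ p q : ℝ × ℝ, 0 ≤ p.2 → 0 ≤ q.2 →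
      dist (F p) (F q) = Real.sqrt ((p.1 - q.1) ^ 2 + (p.2 - q.2) ^ 2)) ∧
    ∀ t, F (t, 0) = γ t

/-- A rank-one isometry: an axial isometry with an axis bounding no flat half-plane. -/
def IsRankOne (g : X ≃ᵢ X) : Prop :=
  ∃ γ τ, IsAxis g γ τ ∧ ¬ BoundsFlatHalfPlane γ

/-- `g` acts with north-south dynamics on the visual boundary. -/
def NorthSouthDynamics (y : X) (g : X ≃ᵢ X) : Prop :=
  ∃ a ∈ visualBoundary y, ∃ b ∈ visualBoundary y, a ≠ b ∧
    bAct y g a = a ∧ bAct y g b = b ∧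
    ∀ U ∈ nhdsWithin a (visualBoundary y), ∀ V ∈ nhdsWithin b (visualBoundary y),
      ∃ k : ℕ, 0 < k ∧ (∀ ξ ∈ visualBoundary y, ξ ∉ V → bAct y (g ^ k) ξ ∈ U) ∧
        (∀ ξ ∈ visualBoundary y, ξ ∉ U → bAct y (g⁻¹ ^ k) ξ ∈ V)

/-- The limit set of a subgroup `G` of the isometry group. -/
def limitSet (G : Subgroup (X ≃ᵢ X)) (y : X) : Set C(X, ℝ) :=
  visualBoundary y ∩ closure ((fun h : X ≃ᵢ X => busFun y (h y)) '' (G : Set (X ≃ᵢ X)))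

/-- `G` is non-elementary: its limit set has at least three points and `G` fixes no
point of the visual boundary. -/
def NonElementary (G : Subgroup (X ≃ᵢ X)) (y : X) : Prop :=
  (∃ a ∈ limitSet G y, ∃ b ∈ limitSet G y, ∃ c ∈ limitSet G y,
    a ≠ b ∧ a ≠ c ∧ b ≠ c) ∧
  ¬ ∃ ξ ∈ visualBoundary y, ∀ g ∈ G, bAct y g ξ = ξ

end Preamble


open scoped Classical in
/-- The projection of a boundary point `ξ` to the closed set `S = γ(J)`, as a subset of the
compactification `X ∪ ∂X ⊆ C(X,ℝ)`: the closure of the set of minima of `ξ` on `S` if minima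
exist, and otherwise the boundary points of `S` reached along sequences in `S` on which `ξ`
tends to its infimum. -/
noncomputable def projSetXi {X : Type*} [MetricSpace X] (y : X) (S : Set X)
    (ξ : C(X, ℝ)) : Set C(X, ℝ) :=
  if ∃ z ∈ S, ∀ q ∈ S, ξ z ≤ ξ q then
    closure (busFun y '' {z ∈ S | ∀ q ∈ S, ξ z ≤ ξ q})
  else
    {w ∈ closure (busFun y '' S) \ busFun y '' S |
      ∃ s : ℕ → X, (∀ n, s n ∈ S) ∧
        Filter.Tendsto (fun n => busFun y (s n)) Filter.atTop (nhds w) ∧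
        ∀ q ∈ S, ∀ ε > (0:ℝ), ∀ᶠ n in Filter.atTop, ξ (s n) < ξ q + ε}


section StmtSixHelpers

open Metric Set Filter Topology

variable {X : Type*} [MetricSpace X]

lemma busFun_apply (y a z : X) : busFun y a z = dist a z - dist a y := rfl

lemma busFun_lip (y a z z' : X) : dist (busFun y a z) (busFun y a z') ≤ dist z z' := by
  simp only [busFun_apply, Real.dist_eq]
  have h : dist a z - dist a y - (dist a z' - dist a y) = dist z a - dist z' a := by
    rw [dist_comm a z, dist_comm a z']; ring
  rw [h]
  exact abs_dist_sub_le z z' a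

lemma tendsto_eval {F : ℕ → C(X, ℝ)} {w : C(X, ℝ)}
    (h : Filter.Tendsto F Filter.atTop (nhds w)) (z : X) :
    Filter.Tendsto (fun n => F n z) Filter.atTop (nhds (w z)) :=
  ((continuous_eval_const z).tendsto w).comp h

lemma tendsto_cm (F : ℕ → C(X, ℝ)) (w : C(X, ℝ))
    (hF : ∀ n z z', dist (F n z) (F n z') ≤ dist z z')
    (hw : ∀ z z', dist (w z) (w z') ≤ dist z z')
    (hpt : ∀ z, Filter.Tendsto (fun n => F n z) Filter.atTop (nhds (w z))) :
    Filter.Tendsto F Filter.atTop (nhds w) := by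
  rw [ContinuousMap.tendsto_iff_forall_isCompact_tendstoUniformlyOn]
  intro K hK
  rw [Metric.tendstoUniformlyOn_iff]
  intro ε hε
  obtain ⟨T, hTfin, hTsub⟩ := Metric.totallyBounded_iff.1 hK.totallyBounded (ε/3) (by linarith)
  have hev : ∀ᶠ n in Filter.atTop, ∀ c ∈ T, dist (F n c) (w c) < ε/3 := by
    rw [Filter.eventually_all_finite hTfin]
    intro c _
    obtain ⟨N, hN⟩ := Metric.tendsto_atTop.1 (hpt c) (ε/3) (by linarith)
    exact Filter.eventually_atTop.2 ⟨N, fun n hn => hN n hn⟩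
  filter_upwards [hev] with n hn z hz
  obtain ⟨c, hcT, hzc⟩ := Set.mem_iUnion₂.1 (hTsub hz)
  rw [Metric.mem_ball] at hzc
  have h4 : dist (w z) (F n z) ≤ dist (w z) (w c) + dist (w c) (F n c) + dist (F n c) (F n z) :=
    dist_triangle4 _ _ _ _
  have h5 := hw z c
  have h6 := hF n c z
  have h7 := hn c hcT
  have h8 : dist (w c) (F n c) = dist (F n c) (w c) := dist_comm _ _
  have h9 : dist z c = dist c z := dist_comm _ _
  linarith

lemma unique_between (hX : IsCAT0 X) {a b p q : X}
    (hsum : dist a p + dist p b = dist a b)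
    (h1 : dist a q = dist a p) (h2 : dist q b = dist p b) : p = q := by
  by_contra hne
  have hD : 0 < dist p q := dist_pos.2 hne
  obtain ⟨σ, hσ, hσ0, hσ1⟩ := hX.geodesic p q
  have h0m : (0:ℝ) ∈ Set.Icc 0 (dist p q) := ⟨le_refl _, dist_nonneg⟩
  have hmm : dist p q / 2 ∈ Set.Icc 0 (dist p q) := ⟨by linarith, by linarith⟩
  have hDm : dist p q ∈ Set.Icc 0 (dist p q) := ⟨dist_nonneg, le_refl _⟩
  have hpm : dist p (σ (dist p q / 2)) = dist p q / 2 := by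
    have h := hσ 0 h0m (dist p q / 2) hmm
    rw [hσ0] at h
    rw [h, abs_of_nonpos (by linarith)]
    ring
  have hqm : dist q (σ (dist p q / 2)) = dist p q / 2 := by
    have h := hσ (dist p q) hDm (dist p q / 2) hmm
    rw [hσ1] at h
    rw [h, abs_of_nonneg (by linarith)]
    ring
  have hcn1 := hX.cn a p q (σ (dist p q / 2)) hpm hqm
  have hcn2 := hX.cn b p q (σ (dist p q / 2)) hpm hqm
  rw [h1] at hcn1
  have e1 : dist b p = dist p b := dist_comm _ _
  have e2 : dist b q = dist p b := (dist_comm b q).trans h2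
  rw [e1, e2] at hcn2
  have hA : dist a (σ (dist p q / 2)) < dist a p := by
    apply lt_of_pow_lt_pow_left₀ 2 dist_nonneg
    nlinarith [pow_pos hD 2]
  have hB : dist b (σ (dist p q / 2)) < dist p b := by
    apply lt_of_pow_lt_pow_left₀ 2 dist_nonneg
    nlinarith [pow_pos hD 2]
  have htri := dist_triangle a (σ (dist p q / 2)) b
  have e3 : dist (σ (dist p q / 2)) b = dist b (σ (dist p q / 2)) := dist_comm _ _
  linarith

lemma dist_mid (hX : IsCAT0 X) {σ : ℝ → X} {L : ℝ} (hσ : IsGeodesicOn σ (Set.Icc 0 L))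
    (x : X) {r₁ r₂ : ℝ} (h1 : r₁ ∈ Set.Icc 0 L) (h2 : r₂ ∈ Set.Icc 0 L) :
    dist x (σ ((r₁ + r₂)/2)) ≤ (dist x (σ r₁) + dist x (σ r₂))/2 := by
  have hm : (r₁ + r₂)/2 ∈ Set.Icc 0 L := ⟨by linarith [h1.1, h2.1], by linarith [h1.2, h2.2]⟩
  have hd12 : dist (σ r₁) (σ r₂) = |r₁ - r₂| := hσ _ h1 _ h2
  have hdm1 : dist (σ r₁) (σ ((r₁ + r₂)/2)) = dist (σ r₁) (σ r₂) / 2 := by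
    rw [hσ _ h1 _ hm, hd12, show r₁ - (r₁ + r₂)/2 = (r₁ - r₂)/2 by ring, abs_div, abs_two]
  have hdm2 : dist (σ r₂) (σ ((r₁ + r₂)/2)) = dist (σ r₁) (σ r₂) / 2 := by
    rw [hσ _ h2 _ hm, hd12, show r₂ - (r₁ + r₂)/2 = (r₂ - r₁)/2 by ring, abs_div, abs_two,
      abs_sub_comm]
  have hcn := hX.cn x (σ r₁) (σ r₂) (σ ((r₁ + r₂)/2)) hdm1 hdm2
  have habs : |dist x (σ r₁) - dist x (σ r₂)| ≤ dist (σ r₁) (σ r₂) := by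
    rw [dist_comm x (σ r₁), dist_comm x (σ r₂)]
    exact abs_dist_sub_le _ _ _
  have hsq : (dist x (σ r₁) - dist x (σ r₂))^2 ≤ dist (σ r₁) (σ r₂)^2 := by
    nlinarith [abs_nonneg (dist x (σ r₁) - dist x (σ r₂)),
      sq_abs (dist x (σ r₁) - dist x (σ r₂))]
  have h1' : dist x (σ ((r₁ + r₂)/2)) ^ 2 ≤ ((dist x (σ r₁) + dist x (σ r₂))/2)^2 := by
    nlinarith
  have hnn : (0:ℝ) ≤ (dist x (σ r₁) + dist x (σ r₂))/2 := by positivity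
  nlinarith [dist_nonneg (x := x) (y := σ ((r₁ + r₂)/2))]

lemma midpoint_convex_bound {f : ℝ → ℝ} {L : ℝ} (hL : 0 < L)
    (hc : ContinuousOn f (Set.Icc 0 L))
    (hm : ∀ r₁ ∈ Set.Icc 0 L, ∀ r₂ ∈ Set.Icc 0 L, f ((r₁ + r₂)/2) ≤ (f r₁ + f r₂)/2)
    {u : ℝ} (hu : u ∈ Set.Icc 0 L) : L * f u ≤ (L - u) * f 0 + u * f L := by
  have hL0 : L ≠ 0 := ne_of_gt hL
  obtain ⟨g, hg⟩ : ∃ g : ℝ → ℝ, g = fun r => f r - ((L - r) * f 0 + r * f L)/L := ⟨_, rfl⟩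
  have hlincont : Continuous fun r : ℝ => ((L - r) * f 0 + r * f L)/L :=
    (((continuous_const.sub continuous_id).mul continuous_const).add
      (continuous_id.mul continuous_const)).div_const _
  have hgc : ContinuousOn g (Set.Icc 0 L) := by rw [hg]; exact hc.sub hlincont.continuousOn
  have hgm : ∀ r₁ ∈ Set.Icc 0 L, ∀ r₂ ∈ Set.Icc 0 L, g ((r₁ + r₂)/2) ≤ (g r₁ + g r₂)/2 := by
    intro r₁ h₁ r₂ h₂
    have h3 := hm r₁ h₁ r₂ h₂
    have hlin : ((L - (r₁ + r₂)/2) * f 0 + ((r₁ + r₂)/2) * f L)/L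
        = (((L - r₁) * f 0 + r₁ * f L)/L + ((L - r₂) * f 0 + r₂ * f L)/L)/2 := by
      field_simp
      ring
    simp only [hg]
    rw [hlin]
    linarith
  have hg0 : g 0 = 0 := by
    rw [hg]
    simp only
    field_simp
    ring
  have hgL : g L = 0 := by
    rw [hg]
    simp only
    field_simp
    ring
  have key : g u ≤ 0 := by
    by_contra hgu
    push_neg at hgu
    obtain ⟨c, hcmem, hcmax⟩ :=
      isCompact_Icc.exists_isMaxOn ⟨0, Set.left_mem_Icc.2 hL.le⟩ hgc
    have hMpos : 0 < g c := lt_of_lt_of_le hgu (hcmax hu)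
    obtain ⟨A, hA⟩ : ∃ A : Set ℝ, A = {r ∈ Set.Icc 0 L | g r = g c} := ⟨_, rfl⟩
    have hAmem : ∀ r, r ∈ A ↔ (r ∈ Set.Icc 0 L ∧ g r = g c) := fun r => by rw [hA]; rfl
    have hAeq : A = Set.Icc 0 L ∩ g ⁻¹' {g c} := by
      ext r
      rw [hAmem r]
      simp
    have hAcl : IsClosed A := by
      rw [hAeq]
      exact hgc.preimage_isClosed_of_isClosed isClosed_Icc isClosed_singleton
    have hAne : A.Nonempty := ⟨c, (hAmem c).2 ⟨hcmem, rfl⟩⟩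
    have hAbdd : BddBelow A := ⟨0, fun r hr => ((hAmem r).1 hr).1.1⟩
    obtain ⟨hc'mem, hc'val⟩ := (hAmem _).1 (hAcl.csInf_mem hAne hAbdd)
    have hc'0 : sInf A ≠ 0 := by
      intro h
      rw [h, hg0] at hc'val
      linarith
    have hc'L : sInf A ≠ L := by
      intro h
      rw [h, hgL] at hc'val
      linarith
    have h0c : 0 < sInf A := lt_of_le_of_ne hc'mem.1 (Ne.symm hc'0)
    have hcL : sInf A < L := lt_of_le_of_ne hc'mem.2 hc'L
    have hδpos : 0 < min (sInf A) (L - sInf A) := lt_min h0c (by linarith)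
    have hd1 := min_le_left (sInf A) (L - sInf A)
    have hd2 := min_le_right (sInf A) (L - sInf A)
    have hr₁ : sInf A - min (sInf A) (L - sInf A) ∈ Set.Icc 0 L :=
      ⟨by linarith, by linarith⟩
    have hr₂ : sInf A + min (sInf A) (L - sInf A) ∈ Set.Icc 0 L :=
      ⟨by linarith, by linarith⟩
    have hmean := hgm _ hr₁ _ hr₂
    have hmid : (sInf A - min (sInf A) (L - sInf A) + (sInf A + min (sInf A) (L - sInf A)))/2
        = sInf A := by ring
    rw [hmid] at hmean
    have hle2 : g (sInf A + min (sInf A) (L - sInf A)) ≤ g c := hcmax hr₂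
    have hle1 : g (sInf A - min (sInf A) (L - sInf A)) ≤ g c := hcmax hr₁
    have hlt1 : g (sInf A - min (sInf A) (L - sInf A)) < g c := by
      rcases hle1.lt_or_eq with h | h
      · exact h
      · exfalso
        have hmemA : sInf A - min (sInf A) (L - sInf A) ∈ A := (hAmem _).2 ⟨hr₁, h⟩
        have := csInf_le hAbdd hmemA
        linarith
    have t1 : g (sInf A - min (sInf A) (L - sInf A)) + g (sInf A + min (sInf A) (L - sInf A)) < g c + g c := by linarith
    have t2 : g c < g c := by
      rw [hc'val] at hmean
      linarith [hmean, t1]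
    exact absurd t2 (lt_irrefl _)
  have h2 := mul_le_mul_of_nonneg_left key hL.le
  rw [mul_zero] at h2
  have h3 : L * (f u - ((L - u) * f 0 + u * f L)/L) = L * f u - ((L - u) * f 0 + u * f L) := by
    field_simp
  simp only [hg] at h2
  rw [h3] at h2
  linarith


lemma dist_mono (hX : IsCAT0 X) {γ : ℝ → X} {J : Set ℝ} (hγ : IsGeodesicOn γ J)
    {s u v : ℝ} (hs : s ∈ J) (hu : u ∈ J) (hv : v ∈ J) (hsu : s ≤ u) (huv : u ≤ v)
    (x : X) (hproj : ∀ r ∈ J, dist x (γ v) ≤ dist x (γ r)) :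
    dist x (γ u) ≤ dist x (γ s) := by
  rcases eq_or_lt_of_le hsu with rfl | hsu'
  · exact le_refl _
  obtain ⟨σ, hσ, hσ0, hσ1⟩ := hX.geodesic (γ s) (γ v)
  have hD : dist (γ s) (γ v) = v - s := by
    rw [hγ s hs v hv, abs_of_nonpos (by linarith)]
    ring
  set D := dist (γ s) (γ v) with hDdef
  have hDpos : 0 < D := by rw [hD]; linarith
  have hu₀ : u - s ∈ Set.Icc 0 D := ⟨by linarith, by rw [hD]; linarith⟩
  have h0 : (0:ℝ) ∈ Set.Icc 0 D := ⟨le_refl _, hDpos.le⟩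
  have hDD : D ∈ Set.Icc 0 D := ⟨hDpos.le, le_refl _⟩
  have e1 : dist (γ s) (σ (u - s)) = u - s := by
    rw [← hσ0, hσ 0 h0 (u - s) hu₀, abs_of_nonpos (by linarith)]
    ring
  have e2 : dist (σ (u - s)) (γ v) = D - (u - s) := by
    rw [← hσ1, hσ (u - s) hu₀ D hDD, abs_of_nonpos (by linarith [hu₀.2])]
    ring
  have hgu : σ (u - s) = γ u := by
    apply unique_between hX (a := γ s) (b := γ v)
    · rw [e1, e2]; ring
    · rw [hγ s hs u hu, e1, abs_of_nonpos (by linarith)]; ring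
    · rw [hγ u hu v hv, e2, hD, abs_of_nonpos (by linarith)]; ring
  have hcont : ContinuousOn (fun r => dist x (σ r)) (Set.Icc 0 D) := by
    have hlip : LipschitzOnWith 1 σ (Set.Icc 0 D) := by
      apply LipschitzOnWith.of_dist_le_mul
      intro r hr r' hr'
      rw [hσ r hr r' hr', Real.dist_eq, NNReal.coe_one, one_mul]
    exact (continuous_const.dist continuous_id).comp_continuousOn hlip.continuousOn
  have hmidc : ∀ r₁ ∈ Set.Icc 0 D, ∀ r₂ ∈ Set.Icc 0 D,
      (fun r => dist x (σ r)) ((r₁ + r₂)/2)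
        ≤ ((fun r => dist x (σ r)) r₁ + (fun r => dist x (σ r)) r₂)/2 :=
    fun r₁ h₁ r₂ h₂ => dist_mid hX hσ x h₁ h₂
  have hb := midpoint_convex_bound hDpos hcont hmidc hu₀
  rw [hσ0, hσ1, hgu] at hb
  have hpv := hproj u hu
  rcases eq_or_lt_of_le hu₀.2 with heq | hlt
  · have huv2 : u = v := by
      rw [hD] at heq
      linarith
    rw [huv2]
    exact hproj s hs
  · have hmul : (u - s) * dist x (γ v) ≤ (u - s) * dist x (γ u) :=
      mul_le_mul_of_nonneg_left hpv (by linarith)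
    have hfin : (D - (u - s)) * dist x (γ u) ≤ (D - (u - s)) * dist x (γ s) := by nlinarith
    exact le_of_mul_le_mul_left hfin (by linarith)


lemma core_atTop (hX : IsCAT0 X) (y : X) (γ : ℝ → X) (J : Set ℝ) (hγ : IsGeodesicOn γ J)
    (x : ℕ → X) (ξ : C(X, ℝ))
    (hconv : Filter.Tendsto (fun i => busFun y (x i)) Filter.atTop (nhds ξ))
    (t : ℕ → ℝ) (ht : ∀ n, t n ∈ J)
    (hproj : ∀ n, ∀ r ∈ J, dist (x n) (γ (t n)) ≤ dist (x n) (γ r))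
    (htop : Filter.Tendsto t Filter.atTop Filter.atTop) :
    ∃ w ∈ projSetXi y (γ '' J) ξ,
      Filter.Tendsto (fun n => busFun y (γ (t n))) Filter.atTop (nhds w) := by
  obtain ⟨Q, hQ⟩ : ∃ Q : Set ℝ, Q = J ∩ Set.Ici (t 0) := ⟨_, rfl⟩
  have hQmem : ∀ r, r ∈ Q ↔ (r ∈ J ∧ t 0 ≤ r) := fun r => by rw [hQ]; rfl
  have hQ0 : t 0 ∈ Q := (hQmem _).2 ⟨ht 0, le_refl _⟩
  have hne : ∀ z : X, ((fun r => dist (γ r) z - r) '' Q).Nonempty :=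
    fun z => ⟨_, Set.mem_image_of_mem _ hQ0⟩
  have hbdd : ∀ z : X, BddBelow ((fun r => dist (γ r) z - r) '' Q) := by
    intro z
    refine ⟨-(t 0) - dist (γ (t 0)) z, ?_⟩
    rintro b ⟨r, hr, rfl⟩
    obtain ⟨hrJ, hrI⟩ := (hQmem r).1 hr
    have h1 : dist (γ r) (γ (t 0)) = r - t 0 := by
      rw [hγ r hrJ (t 0) (ht 0), abs_of_nonneg (by linarith)]
    have h2 := dist_triangle (γ r) z (γ (t 0))
    have h3 : dist z (γ (t 0)) = dist (γ (t 0)) z := dist_comm _ _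
    simp only
    linarith
  obtain ⟨β, hβ⟩ : ∃ β : X → ℝ, β = fun z => sInf ((fun r => dist (γ r) z - r) '' Q) :=
    ⟨_, rfl⟩
  have hβle : ∀ z : X, ∀ r, r ∈ Q → β z ≤ dist (γ r) z - r := by
    intro z r hr
    rw [hβ]
    exact csInf_le (hbdd z) (Set.mem_image_of_mem _ hr)
  have hmonoQ : ∀ z : X, ∀ r r' : ℝ, r ∈ J → r' ∈ J → r ≤ r' →
      dist (γ r') z - r' ≤ dist (γ r) z - r := by
    intro z r r' hr hr' hrr
    have h1 : dist (γ r') (γ r) = r' - r := by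
      rw [hγ r' hr' r hr, abs_of_nonneg (by linarith)]
    have h2 := dist_triangle (γ r') (γ r) z
    linarith
  have hβtend : ∀ z : X, Filter.Tendsto (fun n => dist (γ (t n)) z - t n)
      Filter.atTop (nhds (β z)) := by
    intro z
    rw [Metric.tendsto_atTop]
    intro ε hε
    have heq : sInf ((fun r => dist (γ r) z - r) '' Q) = β z := by rw [hβ]
    have hlt : sInf ((fun r => dist (γ r) z - r) '' Q) < β z + ε := by rw [heq]; linarith
    obtain ⟨a, haS, ha⟩ := exists_lt_of_csInf_lt (hne z) hlt
    obtain ⟨r, hrQ, rfl⟩ := haS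
    obtain ⟨N, hN⟩ := Filter.eventually_atTop.1
      (htop.eventually (Filter.eventually_ge_atTop (max r (t 0))))
    refine ⟨N, fun n hn => ?_⟩
    have h1 := hN n hn
    have htn : t n ∈ Q := (hQmem _).2 ⟨ht n, le_trans (le_max_right _ _) h1⟩
    have h2 := hβle z (t n) htn
    have h3 := hmonoQ z r (t n) ((hQmem r).1 hrQ).1 (ht n) (le_trans (le_max_left _ _) h1)
    have hb : β z ≤ dist (γ r) z - r := hβle z r hrQ
    rw [Real.dist_eq, abs_of_nonneg (by linarith)]
    simp only at ha
    linarith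
  have hβlip : ∀ z z' : X, β z ≤ β z' + dist z z' := by
    intro z z'
    have hall : ∀ b ∈ (fun r => dist (γ r) z' - r) '' Q, β z - dist z z' ≤ b := by
      rintro b ⟨r, hr, rfl⟩
      have h1 := hβle z r hr
      have h2 := dist_triangle (γ r) z' z
      have h3 : dist z' z = dist z z' := dist_comm _ _
      simp only
      linarith
    have h4 := le_csInf (hne z') hall
    have heq : sInf ((fun r => dist (γ r) z' - r) '' Q) = β z' := by rw [hβ]
    rw [heq] at h4
    linarith
  have hwcont : Continuous fun z => β z - β y := by
    have hlipβ : LipschitzWith 1 β := by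
      apply LipschitzWith.of_dist_le_mul
      intro z z'
      rw [NNReal.coe_one, one_mul, Real.dist_eq, abs_le]
      have h1 := hβlip z z'
      have h2 := hβlip z' z
      have h3 : dist z' z = dist z z' := dist_comm _ _
      constructor <;> linarith
    exact hlipβ.continuous.sub continuous_const
  refine ⟨⟨fun z => β z - β y, hwcont⟩, ?_⟩
  set w : C(X, ℝ) := ⟨fun z => β z - β y, hwcont⟩ with hwdef
  have hwz : ∀ z, w z = β z - β y := fun z => rfl
  have hptw : ∀ z, Filter.Tendsto (fun n => busFun y (γ (t n)) z) Filter.atTop (nhds (w z)) := by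
    intro z
    have h1 := (hβtend z).sub (hβtend y)
    rw [← hwz z] at h1
    · exact h1.congr (fun n => by simp only [busFun_apply]; ring)
  have hlipw : ∀ z z', dist (w z) (w z') ≤ dist z z' := by
    intro z z'
    rw [hwz z, hwz z', Real.dist_eq]
    have h1 := hβlip z z'
    have h2 := hβlip z' z
    have h3 : dist z' z = dist z z' := dist_comm _ _
    rw [abs_le]
    constructor <;> linarith
  have htendw : Filter.Tendsto (fun n => busFun y (γ (t n))) Filter.atTop (nhds w) :=
    tendsto_cm _ _ (fun n z z' => busFun_lip y _ z z') hlipw hptw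
  have hmono : ∀ r ∈ J, ∀ u ∈ J, r ≤ u → ξ (γ u) ≤ ξ (γ r) := by
    intro r hr u hu hru
    have hle : ∀ᶠ n in Filter.atTop, busFun y (x n) (γ u) ≤ busFun y (x n) (γ r) := by
      filter_upwards [htop.eventually (Filter.eventually_ge_atTop u)] with n hn
      have := dist_mono hX hγ hr hu (ht n) hru hn (x n) (hproj n)
      simp only [busFun_apply]
      linarith
    exact le_of_tendsto_of_tendsto (tendsto_eval hconv (γ u)) (tendsto_eval hconv (γ r)) hle
  by_cases hmin : ∃ z ∈ γ '' J, ∀ q ∈ γ '' J, ξ z ≤ ξ q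
  · refine ⟨?_, htendw⟩
    unfold projSetXi
    rw [if_pos hmin]
    obtain ⟨z0, hz0S, hz0⟩ := hmin
    obtain ⟨r0, hr0, rfl⟩ := hz0S
    apply mem_closure_of_tendsto htendw
    filter_upwards [htop.eventually (Filter.eventually_ge_atTop r0)] with n hn
    refine Set.mem_image_of_mem _ ⟨⟨t n, ht n, rfl⟩, ?_⟩
    intro q hq
    exact le_trans (hmono r0 hr0 (t n) (ht n) hn) (hz0 q hq)
  · refine ⟨?_, htendw⟩
    unfold projSetXi
    rw [if_neg hmin]
    have hβγ : ∀ m, t 0 ≤ t m → β (γ (t m)) ≤ - t m := by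
      intro m hm
      obtain ⟨n, hn⟩ := (htop.eventually (Filter.eventually_ge_atTop (max (t m) (t 0)))).exists
      have htnQ : t n ∈ Q := (hQmem _).2 ⟨ht n, le_trans (le_max_right _ _) hn⟩
      have h1 := hβle (γ (t m)) (t n) htnQ
      have hd : dist (γ (t n)) (γ (t m)) = t n - t m := by
        rw [hγ _ (ht n) _ (ht m), abs_of_nonneg (by linarith [le_trans (le_max_left _ _) hn])]
      linarith
    refine ⟨⟨?_, ?_⟩, ?_⟩
    · exact mem_closure_of_tendsto htendw
        (Filter.Eventually.of_forall fun n => Set.mem_image_of_mem _ ⟨t n, ht n, rfl⟩)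
    · rintro ⟨q, hqS, hq⟩
      obtain ⟨m, hm⟩ := (htop.eventually
        (Filter.eventually_ge_atTop (max (t 0) (dist q y - β y + 1)))).exists
      have h2 := hβγ m (le_trans (le_max_left _ _) hm)
      have h5 : dist q (γ (t m)) - dist q y = β (γ (t m)) - β y := by
        have hqq : busFun y q (γ (t m)) = w (γ (t m)) := by rw [hq]
        rw [busFun_apply] at hqq
        rw [hqq, hwz]
      have h6 : dist q y - β y + 1 ≤ t m := le_trans (le_max_right _ _) hm
      have h7 : (0:ℝ) ≤ dist q (γ (t m)) := dist_nonneg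
      linarith
    · refine ⟨fun n => γ (t n), fun n => Set.mem_image_of_mem _ (ht n), htendw, ?_⟩
      rintro q ⟨r, hr, rfl⟩ ε hε
      filter_upwards [htop.eventually (Filter.eventually_ge_atTop r)] with n hn
      have := hmono r hr (t n) (ht n) hn
      linarith


end StmtSixHelpers

/-- if `x_i → ξ ∈ ∂X` then, after passing to a subsequence, the
nearest-point projections of the `x_i` to a geodesic converge to a point of the
projection set of `ξ`. -/
theorem stmt_6 {X : Type*} [MetricSpace X] [ProperSpace X] (hX : IsCAT0 X) (y : X)
    (γ : ℝ → X) (J : Set ℝ) (hγ : IsGeodesicOn γ J) (hJcl : IsClosed (γ '' J))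
    (x : ℕ → X) (ξ : C(X, ℝ)) (hξ : ξ ∈ visualBoundary y)
    (hconv : Filter.Tendsto (fun i => busFun y (x i)) Filter.atTop (nhds ξ))
    (p : ℕ → X) (hp : ∀ i, p i ∈ projSet (γ '' J) (x i)) :
    ∃ φ : ℕ → ℕ, StrictMono φ ∧ ∃ w ∈ projSetXi y (γ '' J) ξ,
      Filter.Tendsto (fun i => busFun y (p (φ i))) Filter.atTop (nhds w) := by
  classical
  have hpS : ∀ i, p i ∈ γ '' J := fun i => (hp i).1
  choose t ht hpt using hpS
  have hproj : ∀ i, ∀ r ∈ J, dist (x i) (γ (t i)) ≤ dist (x i) (γ r) := by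
    intro i r hr
    rw [hpt i, (hp i).2]
    exact Metric.infDist_le_dist_of_mem (Set.mem_image_of_mem _ hr)
  by_cases hA : ∃ M : ℝ, ∃ᶠ i in Filter.atTop, |t i| ≤ M
  · -- bounded case: projections subconverge in X
    obtain ⟨M, hM⟩ := hA
    obtain ⟨φ₁, hφ₁, hφ₁P⟩ := Filter.extraction_of_frequently_atTop hM
    have hmem : ∀ n, t (φ₁ n) ∈ Set.Icc (-M) M := fun n => by
      have h := hφ₁P n
      rw [abs_le] at h
      exact ⟨h.1, h.2⟩
    obtain ⟨t₀, ht₀, φ₂, hφ₂, hφ₂t⟩ := isCompact_Icc.tendsto_subseq hmem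
    have hψmono : StrictMono (φ₁ ∘ φ₂) := hφ₁.comp hφ₂
    have hcs : CauchySeq (fun n => p (φ₁ (φ₂ n))) := by
      rw [Metric.cauchySeq_iff]
      intro ε hε
      have hc := hφ₂t.cauchySeq
      rw [Metric.cauchySeq_iff] at hc
      obtain ⟨N, hN⟩ := hc ε hε
      refine ⟨N, fun m hm n hn => ?_⟩
      have h := hN m hm n hn
      rw [← hpt (φ₁ (φ₂ m)), ← hpt (φ₁ (φ₂ n)), hγ _ (ht _) _ (ht _)]
      rw [Real.dist_eq] at h
      exact h
    obtain ⟨q, hq⟩ := cauchySeq_tendsto_of_complete hcs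
    have hqS : q ∈ γ '' J := hJcl.mem_of_tendsto hq
      (Filter.Eventually.of_forall fun n => (hp (φ₁ (φ₂ n))).1)
    have hsub : Filter.Tendsto (fun n => busFun y (x (φ₁ (φ₂ n)))) Filter.atTop (nhds ξ) :=
      hconv.comp (hψmono.tendsto_atTop)
    have hqmin : ∀ rq ∈ γ '' J, ξ q ≤ ξ rq := by
      intro rq hrq
      have h1 : ∀ n, busFun y (x (φ₁ (φ₂ n))) (p (φ₁ (φ₂ n)))
          ≤ busFun y (x (φ₁ (φ₂ n))) rq := by
        intro n
        simp only [busFun_apply]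
        have h2 : dist (x (φ₁ (φ₂ n))) (p (φ₁ (φ₂ n))) ≤ dist (x (φ₁ (φ₂ n))) rq := by
          rw [(hp (φ₁ (φ₂ n))).2]
          exact Metric.infDist_le_dist_of_mem hrq
        linarith
      have h2 : Filter.Tendsto (fun n => busFun y (x (φ₁ (φ₂ n))) q)
          Filter.atTop (nhds (ξ q)) := tendsto_eval hsub q
      have h3 : Filter.Tendsto (fun n => busFun y (x (φ₁ (φ₂ n))) (p (φ₁ (φ₂ n))))
          Filter.atTop (nhds (ξ q)) := by
        apply Filter.Tendsto.congr_dist h2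
        have hd0 : Filter.Tendsto (fun n => dist (p (φ₁ (φ₂ n))) q)
            Filter.atTop (nhds 0) := tendsto_iff_dist_tendsto_zero.1 hq
        apply squeeze_zero (fun n => dist_nonneg) (fun n => ?_) hd0
        calc dist (busFun y (x (φ₁ (φ₂ n))) q) (busFun y (x (φ₁ (φ₂ n))) (p (φ₁ (φ₂ n))))
            ≤ dist q (p (φ₁ (φ₂ n))) := busFun_lip y _ _ _
          _ = dist (p (φ₁ (φ₂ n))) q := dist_comm _ _
      have h4 : Filter.Tendsto (fun n => busFun y (x (φ₁ (φ₂ n))) rq)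
          Filter.atTop (nhds (ξ rq)) := tendsto_eval hsub rq
      exact le_of_tendsto_of_tendsto h3 h4 (Filter.Eventually.of_forall h1)
    refine ⟨φ₁ ∘ φ₂, hψmono, busFun y q, ?_, ?_⟩
    · unfold projSetXi
      rw [if_pos ⟨q, hqS, hqmin⟩]
      exact subset_closure (Set.mem_image_of_mem _ ⟨hqS, hqmin⟩)
    · apply tendsto_cm
      · exact fun n z z' => busFun_lip y _ z z'
      · exact fun z z' => busFun_lip y q z z'
      · intro z
        simp only [busFun_apply]
        have hf : Continuous fun a : X => dist a z - dist a y :=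
          (continuous_id.dist continuous_const).sub (continuous_id.dist continuous_const)
        exact (hf.tendsto q).comp hq
  · -- unbounded case
    have hA' : ∀ M : ℝ, ∀ᶠ i in Filter.atTop, M < |t i| := by
      intro M
      by_contra hcon
      exact hA ⟨M, (Filter.not_eventually.1 hcon).mono fun i hi => not_lt.1 hi⟩
    by_cases hpos : ∃ᶠ i in Filter.atTop, 0 ≤ t i
    · have hfreq : ∀ n : ℕ, ∃ᶠ i in Filter.atTop, (n : ℝ) < t i := by
        intro n
        apply (hpos.and_eventually (hA' n)).mono
        rintro i ⟨h0, hn⟩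
        rwa [abs_of_nonneg h0] at hn
      obtain ⟨φ, hφ, hφP⟩ := Filter.extraction_forall_of_frequently hfreq
      have htop : Filter.Tendsto (fun n => t (φ n)) Filter.atTop Filter.atTop :=
        tendsto_atTop_mono (fun n => (hφP n).le) tendsto_natCast_atTop_atTop
      obtain ⟨w, hw, htd⟩ := core_atTop hX y γ J hγ (fun n => x (φ n)) ξ
        (hconv.comp hφ.tendsto_atTop) (fun n => t (φ n)) (fun n => ht (φ n))
        (fun n => hproj (φ n)) htop
      exact ⟨φ, hφ, w, hw, htd.congr (fun n => by rw [hpt (φ n)])⟩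
    · have hneg : ∀ᶠ i in Filter.atTop, t i < 0 :=
        (Filter.not_frequently.1 hpos).mono fun i hi => not_le.1 hi
      have hfreq : ∀ n : ℕ, ∃ᶠ i in Filter.atTop, (n : ℝ) < - t i := by
        intro n
        apply ((hA' n).and hneg).frequently.mono
        rintro i ⟨hn, h0⟩
        rwa [abs_of_neg h0] at hn
      obtain ⟨φ, hφ, hφP⟩ := Filter.extraction_forall_of_frequently hfreq
      have htop : Filter.Tendsto (fun n => - t (φ n)) Filter.atTop Filter.atTop :=
        tendsto_atTop_mono (fun n => (hφP n).le) tendsto_natCast_atTop_atTop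
      have hγ'geo : IsGeodesicOn (fun r => γ (-r)) {r : ℝ | -r ∈ J} := by
        intro a ha b hb
        show dist (γ (-a)) (γ (-b)) = |a - b|
        rw [hγ (-a) ha (-b) hb, show -a - -b = -(a - b) by ring, abs_neg]
      have himg : (fun r => γ (-r)) '' {r : ℝ | -r ∈ J} = γ '' J := by
        ext z
        constructor
        · rintro ⟨r, hr, rfl⟩
          exact ⟨-r, hr, rfl⟩
        · rintro ⟨r, hr, rfl⟩
          exact ⟨-r, by simpa using hr, by simp⟩
      have hproj' : ∀ n, ∀ r ∈ {r : ℝ | -r ∈ J},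
          dist (x (φ n)) ((fun r => γ (-r)) (- t (φ n))) ≤ dist (x (φ n)) ((fun r => γ (-r)) r) := by
        intro n r hr
        show dist (x (φ n)) (γ (- - t (φ n))) ≤ dist (x (φ n)) (γ (-r))
        rw [neg_neg]
        exact hproj (φ n) (-r) hr
      have ht' : ∀ n, - t (φ n) ∈ {r : ℝ | -r ∈ J} := fun n => by
        simp only [Set.mem_setOf_eq, neg_neg]
        exact ht (φ n)
      obtain ⟨w, hw, htd⟩ := core_atTop hX y (fun r => γ (-r)) {r : ℝ | -r ∈ J} hγ'geo
        (fun n => x (φ n)) ξ (hconv.comp hφ.tendsto_atTop) (fun n => - t (φ n)) ht'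
        hproj' htop
      rw [himg] at hw
      refine ⟨φ, hφ, w, hw, htd.congr (fun n => ?_)⟩
      show busFun y (γ (- - t (φ n))) = busFun y (p (φ n))
      rw [neg_neg, hpt (φ n)]
end

section
/- Let X be a proper CAT(0) space and g an axial isometry of X which acts on the visual boundary ∂X with north-south dynamics. Then g is rank-one, i.e. g has an axis which does not bound a flat half-plane. -/
open Metric Set Filter Topology

section Aux

variable {X : Type*} [MetricSpace X]

lemma lip_aux (x : X) (K : ℝ) : LipschitzWith 1 (fun z : X => dist x z - K) := by
  apply LipschitzWith.of_dist_le_mul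
  intro z w
  rw [NNReal.coe_one, one_mul, Real.dist_eq, abs_sub_le_iff]
  constructor
  · linarith [dist_triangle x w z, dist_comm z w]
  · linarith [dist_triangle x z w, dist_comm z w]

/-- Pointwise convergence of an equi-Lipschitz family of continuous maps implies
convergence in the compact-open topology. -/
lemma tendsto_cm_of_lipschitz {ι : Type*} {ℱ : Filter ι}
    (F : ι → C(X, ℝ)) (f : C(X, ℝ))
    (hl : ∀ i, LipschitzWith 1 (F i))
    (hp : ∀ z, Tendsto (fun i => F i z) ℱ (𝓝 (f z))) :
    Tendsto F ℱ (𝓝 f) := by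
  rw [ContinuousMap.tendsto_iff_forall_isCompact_tendstoUniformlyOn]
  intro K hK
  haveI : CompactSpace K := isCompact_iff_compactSpace.mp hK
  rw [tendstoUniformlyOn_iff_tendstoUniformly_comp_coe]
  set F' : ι → K → ℝ := fun i (x : K) => F i x with hF'
  have heq : Equicontinuous F' := by
    apply UniformEquicontinuous.equicontinuous
    apply Metric.uniformEquicontinuous_of_continuity_modulus (fun d => d) tendsto_id
    intro x z i
    have h1 := (hl i).dist_le_mul (x : X) (z : X)
    rw [NNReal.coe_one, one_mul] at h1
    simpa [hF', Subtype.dist_eq] using h1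
  have key := heq.tendsto_uniformFun_iff_pi ℱ (fun x : K => f x)
  have hpt : Tendsto F' ℱ (𝓝 fun x : K => f x) := by
    rw [tendsto_pi_nhds]
    exact fun x => hp x
  have h2 := key.mpr hpt
  rwa [UniformFun.tendsto_iff_tendstoUniformly] at h2

/-- Existence of the Busemann point of a unit-speed ray, together with the
pointwise description of the Busemann function. -/
lemma busemann_exists (y : X) (ρ : ℝ → X)
    (hρ : ∀ s, 0 ≤ s → ∀ t, 0 ≤ t → dist (ρ s) (ρ t) = |s - t|) :
    ∃ (ξ : C(X, ℝ)) (c : X → ℝ),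
      Tendsto (fun s => busFun y (ρ s)) atTop (𝓝 ξ) ∧
      (∀ z, Tendsto (fun s : ℝ => dist (ρ s) z - s) atTop (𝓝 (c z))) ∧
      ∀ z, ξ z = c z - c y := by
  set h : X → ℝ → ℝ := fun z s => dist (ρ (max s 0)) z - (max s 0) with hh
  have hmax : ∀ s t : ℝ, dist (ρ (max s 0)) (ρ (max t 0)) = |max s 0 - max t 0| :=
    fun s t => hρ _ (le_max_right _ _) _ (le_max_right _ _)
  have hanti : ∀ z, Antitone (h z) := by
    intro z s t hst
    have hmm : max s 0 ≤ max t 0 := max_le_max hst le_rfl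
    have h2 : dist (ρ (max t 0)) (ρ (max s 0)) = max t 0 - max s 0 := by
      rw [hmax t s, abs_of_nonneg (by linarith)]
    have h1 := dist_triangle (ρ (max t 0)) (ρ (max s 0)) z
    show dist (ρ (max t 0)) z - (max t 0) ≤ dist (ρ (max s 0)) z - (max s 0)
    linarith
  have hbdd : ∀ z, BddBelow (Set.range (h z)) := by
    intro z
    refine ⟨-dist (ρ 0) z, ?_⟩
    rintro r ⟨s, rfl⟩
    have h1 := dist_triangle (ρ 0) z (ρ (max s 0))
    rw [dist_comm z (ρ (max s 0))] at h1
    have h2 : dist (ρ 0) (ρ (max s 0)) = max s 0 := by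
      rw [hρ 0 le_rfl _ (le_max_right _ _), abs_of_nonpos (by simp [sub_nonpos])]
      ring
    show -dist (ρ 0) z ≤ dist (ρ (max s 0)) z - (max s 0)
    linarith
  set c : X → ℝ := fun z => ⨅ s, h z s with hc
  have hcdef : ∀ z, c z = ⨅ s, h z s := fun _ => rfl
  have hctend : ∀ z, Tendsto (h z) atTop (𝓝 (c z)) := fun z =>
    tendsto_atTop_ciInf (hanti z) (hbdd z)
  have hcz : ∀ z, Tendsto (fun s : ℝ => dist (ρ s) z - s) atTop (𝓝 (c z)) := by
    intro z
    apply (hctend z).congr'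
    filter_upwards [eventually_ge_atTop (0:ℝ)] with s hs
    show dist (ρ (max s 0)) z - (max s 0) = dist (ρ s) z - s
    rw [max_eq_left hs]
  have hkey : ∀ z w : X, c z ≤ c w + dist w z := by
    intro z w
    have h1 : c z - dist w z ≤ ⨅ s, h w s := by
      refine le_ciInf fun s => ?_
      have h2 : c z ≤ h z s := ciInf_le (hbdd z) s
      have h3 : dist (ρ (max s 0)) z ≤ dist (ρ (max s 0)) w + dist w z := dist_triangle _ _ _
      have h4 : h z s = dist (ρ (max s 0)) z - (max s 0) := rfl
      have h5 : h w s = dist (ρ (max s 0)) w - (max s 0) := rfl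
      linarith
    rw [← hcdef w] at h1
    linarith
  have hlipc : LipschitzWith 1 c := by
    apply LipschitzWith.of_dist_le_mul
    intro z w
    rw [NNReal.coe_one, one_mul, Real.dist_eq, abs_sub_le_iff]
    constructor
    · linarith [hkey z w, dist_comm w z]
    · linarith [hkey w z, dist_comm z w]
  refine ⟨⟨fun z => c z - c y, hlipc.continuous.sub continuous_const⟩, c, ?_, hcz, fun z => rfl⟩
  apply tendsto_cm_of_lipschitz
  · intro s
    exact lip_aux (ρ s) (dist (ρ s) y)
  · intro z
    have h6 : Tendsto (fun s : ℝ => (dist (ρ s) z - s) - (dist (ρ s) y - s)) atTop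
        (𝓝 (c z - c y)) := (hcz z).sub (hcz y)
    apply h6.congr
    intro s
    show dist (ρ s) z - s - (dist (ρ s) y - s) = dist (ρ s) z - dist (ρ s) y
    ring
  
lemma sqrt_tendsto (t : ℝ) :
    Tendsto (fun s : ℝ => Real.sqrt (t ^ 2 + s ^ 2) - s) atTop (𝓝 0) := by
  have hub : Tendsto (fun s : ℝ => t ^ 2 / (2 * s)) atTop (𝓝 0) := by
    apply Tendsto.div_atTop (tendsto_const_nhds)
    exact tendsto_id.const_mul_atTop (by norm_num : (0:ℝ) < 2)
  apply tendsto_of_tendsto_of_tendsto_of_le_of_le' tendsto_const_nhds hub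
  · filter_upwards [eventually_ge_atTop (0:ℝ)] with s hs
    have h1 : Real.sqrt (s ^ 2) ≤ Real.sqrt (t ^ 2 + s ^ 2) :=
      Real.sqrt_le_sqrt (by nlinarith)
    rw [Real.sqrt_sq hs] at h1
    linarith
  · filter_upwards [eventually_gt_atTop (0:ℝ)] with s hs
    have h1 : t ^ 2 + s ^ 2 ≤ (s + t ^ 2 / (2 * s)) ^ 2 := by
      have h0 : (s + t ^ 2 / (2 * s)) ^ 2 = s ^ 2 + t ^ 2 + (t ^ 2 / (2 * s)) ^ 2 := by
        field_simp
        ring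
      nlinarith [sq_nonneg (t ^ 2 / (2 * s))]
    have h2 : Real.sqrt (t ^ 2 + s ^ 2) ≤ s + t ^ 2 / (2 * s) := by
      have h3 := Real.sqrt_le_sqrt h1
      rwa [Real.sqrt_sq (by positivity)] at h3
    linarith

end Aux


/-- an axial isometry acting with north-south dynamics on the visual
boundary is rank-one. -/
theorem stmt_13 {X : Type*} [MetricSpace X] [ProperSpace X] (hX : IsCAT0 X) (y : X)
    (g : X ≃ᵢ X) (haxial : ∃ γ τ, IsAxis g γ τ)
    (hns : NorthSouthDynamics y g) :
    IsRankOne g := by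
  obtain ⟨γ, τ, haxis⟩ := haxial
  refine ⟨γ, τ, haxis, ?_⟩
  rintro ⟨F, hF, hFγ⟩
  obtain ⟨hgeo, hτ, hg, -⟩ := haxis
  obtain ⟨a, ha, b, hb, hab, -, -, hnsd⟩ := hns
  have hdist : ∀ s t : ℝ, dist (γ s) (γ t) = |s - t| := fun s t =>
    hgeo s trivial t trivial
  -- action of powers of `g` on the axis
  have gk : ∀ (k : ℕ) (t : ℝ), (g ^ k) (γ t) = γ (t + k * τ) := by
    intro k
    induction k with
    | zero => intro t; simp
    | succ n ih =>
      intro t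
      rw [pow_succ, IsometryEquiv.coe_mul, Function.comp_apply, hg, ih]
      congr 1
      push_cast
      ring
  have gksymm : ∀ (k : ℕ) (t : ℝ), (g ^ k).symm (γ t) = γ (t - k * τ) := by
    intro k t
    have h1 : (g ^ k) (γ (t - k * τ)) = γ t := by
      rw [gk]; congr 1; ring
    calc (g ^ k).symm (γ t) = (g ^ k).symm ((g ^ k) (γ (t - k * τ))) := by rw [h1]
    _ = γ (t - k * τ) := (g ^ k).symm_apply_apply _
  -- the three Busemann points
  obtain ⟨ξa, ca, hta, hca, hva⟩ := busemann_exists y γ (fun s _ t _ => hdist s t)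
  obtain ⟨ξb, cb, htb, hcb, hvb⟩ := busemann_exists y (fun s => γ (-s))
    (fun s _ t _ => by rw [hdist, show -s - -t = -(s - t) by ring, abs_neg])
  obtain ⟨ξF, cF, htF, hcF, hvF⟩ := busemann_exists y (fun s => F (0, s))
    (fun s hs t ht => by
      rw [hF (0, s) (0, t) hs ht]
      simp [Real.sqrt_sq_eq_abs])
  -- values of the Busemann functions along the axis
  have hcaγ : ∀ u : ℝ, ca (γ u) = -u := by
    intro u
    refine tendsto_nhds_unique (hca (γ u)) ?_
    apply tendsto_const_nhds.congr'
    filter_upwards [eventually_ge_atTop u] with s hs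
    rw [hdist, abs_of_nonneg (by linarith)]
    ring
  have hcbγ : ∀ u : ℝ, cb (γ u) = u := by
    intro u
    refine tendsto_nhds_unique (hcb (γ u)) ?_
    apply tendsto_const_nhds.congr'
    filter_upwards [eventually_ge_atTop (-u)] with s hs
    rw [hdist, abs_of_nonpos (by linarith)]
    ring
  have hcFγ : ∀ u : ℝ, cF (γ u) = 0 := by
    intro u
    refine tendsto_nhds_unique (hcF (γ u)) ?_
    apply (sqrt_tendsto u).congr'
    filter_upwards [eventually_ge_atTop (0 : ℝ)] with s hs
    rw [← hFγ u, hF (0, s) (u, 0) hs le_rfl]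
    congr 2
    ring
  have hcFρ : ∀ t : ℝ, 0 ≤ t → cF (F (0, t)) = -t := by
    intro t ht
    refine tendsto_nhds_unique (hcF (F (0, t))) ?_
    apply tendsto_const_nhds.congr'
    filter_upwards [eventually_ge_atTop t] with s hs
    rw [hF (0, s) (0, t) (le_trans ht hs) ht]
    rw [show ((0:ℝ) - 0) ^ 2 + (s - t) ^ 2 = (s - t) ^ 2 by ring, Real.sqrt_sq_eq_abs,
      abs_of_nonneg (by linarith)]
    ring
  -- membership in the visual boundary
  have mem : ∀ (ξ : C(X, ℝ)) (c : X → ℝ) (ρ : ℝ → X),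
      Tendsto (fun s => busFun y (ρ s)) atTop (𝓝 ξ) → (∀ z, ξ z = c z - c y) →
      (∀ t, 0 ≤ t → c (ρ t) = -t) → ξ ∈ visualBoundary y := by
    intro ξ c ρ ht hv hcρ
    constructor
    · exact mem_closure_of_tendsto ht (Eventually.of_forall fun s => mem_range_self _)
    · rintro ⟨x, hx⟩
      have h0 : (0:ℝ) ≤ dist x y + |c y| + 1 := by positivity
      have h1 : ξ (ρ (dist x y + |c y| + 1)) = -(dist x y + |c y| + 1) - c y := by
        rw [hv, hcρ _ h0]
      have h2 : ξ (ρ (dist x y + |c y| + 1)) = dist x (ρ (dist x y + |c y| + 1)) - dist x y := by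
        rw [← hx]; rfl
      have h3 := dist_nonneg (x := x) (y := ρ (dist x y + |c y| + 1))
      have h4 := neg_abs_le (c y)
      rw [h1] at h2
      linarith
  have hmema : ξa ∈ visualBoundary y :=
    mem ξa ca γ hta hva (fun t _ => hcaγ t)
  have hmemb : ξb ∈ visualBoundary y :=
    mem ξb cb (fun s => γ (-s)) htb hvb (fun t _ => hcbγ (-t))
  have hmemF : ξF ∈ visualBoundary y :=
    mem ξF cF (fun s => F (0, s)) htF hvF hcFρ
  -- shift formulas
  have hshifta : ∀ (k : ℕ) (z : X), ca ((g ^ k).symm z) = ca z + k * τ := by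
    intro k z
    refine tendsto_nhds_unique (hca _) ?_
    have e : ∀ s : ℝ, dist (γ s) ((g ^ k).symm z) = dist (γ (s + k * τ)) z := by
      intro s
      conv_lhs => rw [show γ s = (g ^ k).symm (γ (s + k * τ)) by
        rw [gksymm]; congr 1; ring]
      exact (g ^ k).symm.dist_eq _ _
    have h1 : Tendsto (fun s : ℝ => dist (γ (s + k * τ)) z - (s + k * τ)) atTop (𝓝 (ca z)) :=
      (hca z).comp (tendsto_atTop_add_const_right atTop ((k : ℝ) * τ) tendsto_id)
    have h2 := h1.add_const ((k : ℝ) * τ)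
    apply h2.congr
    intro s
    rw [e s]
    ring
  have hshiftb : ∀ (k : ℕ) (z : X), cb ((g ^ k).symm z) = cb z - k * τ := by
    intro k z
    refine tendsto_nhds_unique (hcb _) ?_
    have e : ∀ s : ℝ, dist (γ (-s)) ((g ^ k).symm z) = dist (γ (-(s + -((k : ℝ) * τ)))) z := by
      intro s
      conv_lhs => rw [show γ (-s) = (g ^ k).symm (γ (-(s + -((k : ℝ) * τ)))) by
        rw [gksymm]; congr 1; ring]
      exact (g ^ k).symm.dist_eq _ _
    have h1 : Tendsto (fun s : ℝ => dist (γ (-(s + -((k : ℝ) * τ)))) z - (s + -((k : ℝ) * τ)))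
        atTop (𝓝 (cb z)) :=
      (hcb z).comp (tendsto_atTop_add_const_right atTop (-((k : ℝ) * τ)) tendsto_id)
    have h2 := h1.add_const (-((k : ℝ) * τ))
    apply h2.congr
    intro s
    rw [e s]
    ring
  -- the endpoints of the axis are fixed by the boundary action
  have hfixa : ∀ k : ℕ, bAct y (g ^ k) ξa = ξa := by
    intro k
    ext z
    show ξa ((g ^ k).symm z) - ξa ((g ^ k).symm y) = ξa z
    simp only [hva, hshifta]
    ring
  have hfixb : ∀ k : ℕ, bAct y (g ^ k) ξb = ξb := by
    intro k
    ext z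
    show ξb ((g ^ k).symm z) - ξb ((g ^ k).symm y) = ξb z
    simp only [hvb, hshiftb]
    ring
  -- any boundary point fixed by all powers is `a` or `b`
  have key : ∀ ξ : C(X, ℝ), ξ ∈ visualBoundary y → (∀ k : ℕ, bAct y (g ^ k) ξ = ξ) →
      ξ = a ∨ ξ = b := by
    intro ξ hξ hfix
    by_contra hcon
    push_neg at hcon
    obtain ⟨hξa, hξb⟩ := hcon
    have hUopen : IsOpen ({ξ}ᶜ : Set C(X, ℝ)) := isOpen_compl_singleton
    have hU : ({ξ}ᶜ : Set C(X, ℝ)) ∈ nhdsWithin a (visualBoundary y) :=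
      mem_nhdsWithin_of_mem_nhds (hUopen.mem_nhds (by simpa using (Ne.symm hξa)))
    have hV : ({ξ}ᶜ : Set C(X, ℝ)) ∈ nhdsWithin b (visualBoundary y) :=
      mem_nhdsWithin_of_mem_nhds (hUopen.mem_nhds (by simpa using (Ne.symm hξb)))
    obtain ⟨k, hk, h1, -⟩ := hnsd _ hU _ hV
    have h2 := h1 ξ hξ (by simp)
    rw [hfix k] at h2
    simp at h2
  -- evaluation differences
  have hEa : ξa (γ 1) - ξa (γ 0) = -1 := by
    simp only [hva, hcaγ]; ring
  have hEb : ξb (γ 1) - ξb (γ 0) = 1 := by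
    simp only [hvb, hcbγ]; ring
  have hEF : ξF (γ 1) - ξF (γ 0) = 0 := by
    simp only [hvF, hcFγ]; ring
  have hEgF : ∀ k : ℕ, (bAct y (g ^ k) ξF) (γ 1) - (bAct y (g ^ k) ξF) (γ 0) = 0 := by
    intro k
    show (ξF ((g ^ k).symm (γ 1)) - ξF ((g ^ k).symm y)) -
      (ξF ((g ^ k).symm (γ 0)) - ξF ((g ^ k).symm y)) = 0
    rw [gksymm, gksymm]
    simp only [hvF, hcFγ]
    ring
  -- identify `a` and `b` with the endpoints of the axis
  have habs : (a (γ 1) - a (γ 0) = -1 ∧ b (γ 1) - b (γ 0) = 1) ∨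
      (a (γ 1) - a (γ 0) = 1 ∧ b (γ 1) - b (γ 0) = -1) := by
    rcases key ξa hmema hfixa with h | h <;> rcases key ξb hmemb hfixb with h' | h'
    · exfalso
      rw [h] at hEa; rw [h'] at hEb; linarith
    · exact Or.inl ⟨h ▸ hEa, h' ▸ hEb⟩
    · exact Or.inr ⟨h' ▸ hEb, h ▸ hEa⟩
    · exfalso
      rw [h] at hEa; rw [h'] at hEb; linarith
  -- final contradiction via north-south dynamics
  have hEcont : Continuous (fun f : C(X, ℝ) => f (γ 1) - f (γ 0)) :=
    (continuous_eval_const (γ 1)).sub (continuous_eval_const (γ 0))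
  have hUmem : (fun f : C(X, ℝ) => f (γ 1) - f (γ 0)) ⁻¹' (Metric.ball (a (γ 1) - a (γ 0)) (1/2))
      ∈ nhdsWithin a (visualBoundary y) := by
    refine mem_nhdsWithin_of_mem_nhds ((Metric.isOpen_ball.preimage hEcont).mem_nhds ?_)
    simp
  have hVmem : (fun f : C(X, ℝ) => f (γ 1) - f (γ 0)) ⁻¹' (Metric.ball (b (γ 1) - b (γ 0)) (1/2))
      ∈ nhdsWithin b (visualBoundary y) := by
    refine mem_nhdsWithin_of_mem_nhds ((Metric.isOpen_ball.preimage hEcont).mem_nhds ?_)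
    simp
  obtain ⟨k, hk, h1, -⟩ := hnsd _ hUmem _ hVmem
  have hFnotV : ξF ∉ (fun f : C(X, ℝ) => f (γ 1) - f (γ 0)) ⁻¹'
      (Metric.ball (b (γ 1) - b (γ 0)) (1/2)) := by
    simp only [Set.mem_preimage, Metric.mem_ball, Real.dist_eq]
    rw [hEF]
    rcases habs with ⟨-, h2⟩ | ⟨-, h2⟩ <;> rw [h2] <;> norm_num
  have h2 := h1 ξF hmemF hFnotV
  simp only [Set.mem_preimage, Metric.mem_ball, Real.dist_eq] at h2
  rw [hEgF k] at h2
  rcases habs with ⟨h1', -⟩ | ⟨h1', -⟩ <;> rw [h1'] at h2 <;> norm_num at h2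
end
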